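/- Let τ : A → A⁺ be a one-to-one primitive substitution of constant length p with X_τ infinite, with a ≠ b in A satisfying τ(a) = uavaw, τ(b) = u'bv'bw', |u| = |u'| ≠ 0, |v| = |v'|, |w| = |w'| ≠ 0, and vaw has a coincidence with v'bw'. Then the pair x = ...τ²ᵐ(u)τ^{2m−1}(uav)...τ(uav)u.avaw τ(w)...τ^{2m−1}(w)τ^{2m}(vaw)... , y = ...τ²ᵐ(u')τ^{2m−1}(u'bv')...τ(u'bv')u'.bv'bw' τ(w')...τ^{2m−1}(w')τ^{2m}(v'bw')... is a Li–Yorke pair which is recurrent under T×T, i.e., a strong Li–Yorke pair: for every n ∈ ℕ there is m with (x(−n,n), y(−n,n)) occurring as a subword-pair of (τ^{2m}(a), τ^{2m}(b)). -/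

import Mathlib

/-- Extension of a substitution to finite words, by concatenation. -/
def substWord {A : Type*} (τ : A → List A) (w : List A) : List A :=
  (w.map τ).flatten

/-- The shift map on two-sided sequences. -/
def shift {A : Type*} (x : ℤ → A) : ℤ → A := fun i => x (i + 1)

/-- Extension of a constant-length-`p` substitution to two-sided sequences:
the block `τ(x_q)` occupies coordinates `[pq, pq + p)` of `τ(x)`. -/
def substExt {A : Type*} [Inhabited A] (τ : A → List A) (p : ℕ) (x : ℤ → A) :
    ℤ → A :=
  fun i => (τ (x (i / (p : ℤ)))).getD (i % (p : ℤ)).toNat default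

/-- A substitution is primitive if some power sends every letter to a word
containing every letter. -/
def IsPrimitive {A : Type*} (τ : A → List A) : Prop :=
  ∃ n : ℕ, ∀ a b : A, a ∈ (substWord τ)^[n] [b]

/-- The subshift generated by `τ`: sequences all of whose finite subwords occur
in some `τⁿ(a)`. -/
def XSet {A : Type*} (τ : A → List A) : Set (ℤ → A) :=
  {x | ∀ (i : ℤ) (l : ℕ), ∃ (n : ℕ) (c : A),
    (List.ofFn fun j : Fin l => x (i + (j : ℤ))) <:+: (substWord τ)^[n] [c]}

/-- Proximality of a pair for the shift on `A^ℤ` (with the product topology):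
arbitrarily large central windows agree at some arbitrarily late time. -/
def IsProximalPair {A : Type*} (x y : ℤ → A) : Prop :=
  ∀ N M : ℕ, ∃ n : ℕ, M ≤ n ∧ ∀ j : ℤ, |j| ≤ (N : ℤ) → x (j + n) = y (j + n)

/-- A Li–Yorke pair for the shift on `A^ℤ`: proximal but not asymptotic
(the two sequences differ at infinitely many coordinates). -/
def IsLiYorkePair {A : Type*} (x y : ℤ → A) : Prop :=
  IsProximalPair x y ∧ {m : ℤ | x m ≠ y m}.Infinite

/-- The left word `τᵐ(f m) ⋯ τ(f 1) (f 0)`. -/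
def leftWord {A : Type*} (τ : A → List A) (f : ℕ → List A) : ℕ → List A
  | 0 => f 0
  | m + 1 => (substWord τ)^[m + 1] (f (m + 1)) ++ leftWord τ f m

/-- The right word `(g 0) τ(g 1) ⋯ τᵐ(g m)`. -/
def rightWord {A : Type*} (τ : A → List A) (g : ℕ → List A) : ℕ → List A
  | 0 => g 0
  | m + 1 => rightWord τ g m ++ (substWord τ)^[m + 1] (g (m + 1))

lemma substWord_append {A : Type*} (τ : A → List A) (w1 w2 : List A) :
    substWord τ (w1 ++ w2) = substWord τ w1 ++ substWord τ w2 := by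
  simp [substWord]

lemma iter_append {A : Type*} (τ : A → List A) (m : ℕ) (w1 w2 : List A) :
    (substWord τ)^[m] (w1 ++ w2) = (substWord τ)^[m] w1 ++ (substWord τ)^[m] w2 := by
  induction m generalizing w1 w2 with
  | zero => simp
  | succ m ih => simp [Function.iterate_succ_apply, substWord_append, ih]

lemma substWord_len {A : Type*} (τ : A → List A) (p : ℕ)
    (hlen : ∀ a : A, (τ a).length = p) (w : List A) :
    (substWord τ w).length = p * w.length := by
  induction w with
  | nil => simp [substWord]
  | cons c t ih =>
      have : substWord τ (c :: t) = τ c ++ substWord τ t := by simp [substWord]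
      rw [this]; simp [ih, hlen c]; ring

lemma iter_len {A : Type*} (τ : A → List A) (p : ℕ)
    (hlen : ∀ a : A, (τ a).length = p) (m : ℕ) (w : List A) :
    ((substWord τ)^[m] w).length = p ^ m * w.length := by
  induction m generalizing w with
  | zero => simp
  | succ m ih =>
      rw [Function.iterate_succ_apply, ih, substWord_len τ p hlen]
      ring

lemma substWord_singleton {A : Type*} (τ : A → List A) (c : A) :
    substWord τ [c] = τ c := by simp [substWord]

lemma iter_getD_block {A : Type*} [Inhabited A] (τ : A → List A) (p : ℕ)
    (hlen : ∀ a : A, (τ a).length = p) (m : ℕ) (w : List A) (j t : ℕ)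
    (hj : j < w.length) (ht : t < p ^ m) :
    ((substWord τ)^[m] w).getD (j * p ^ m + t) default =
      ((substWord τ)^[m] [w.getD j default]).getD t default := by
  induction w generalizing j with
  | nil => simp at hj
  | cons c tl ih =>
      have hsplit : (c :: tl) = [c] ++ tl := rfl
      rw [hsplit, iter_append]
      cases j with
      | zero =>
          rw [List.getD_append _ _ _ _ (by rw [iter_len τ p hlen]; simpa using ht)]
          simp
      | succ j =>
          have hlen1 : ((substWord τ)^[m] [c]).length = p ^ m := by
            rw [iter_len τ p hlen]; simp
          rw [List.getD_append_right _ _ _ _ (by rw [hlen1]; nlinarith [Nat.succ_le_of_lt ht])]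
          have harith : (j + 1) * p ^ m + t - p ^ m = j * p ^ m + t := by
            have : (j + 1) * p ^ m = j * p ^ m + p ^ m := by ring
            omega
          rw [hlen1, harith, ih j (by simpa using hj)]
          simp

lemma center {A : Type*} (τ : A → List A) (a : A) (u v w : List A)
    (hτa : τ a = u ++ a :: (v ++ a :: w)) (m : ℕ) :
    leftWord τ (fun i => if i % 2 = 0 then u else u ++ a :: v) m ++
      a :: rightWord τ (fun i => if i % 2 = 0 then v ++ a :: w else w) m =
      (substWord τ)^[m + 1] [a] := by
  induction m with
  | zero =>
      simp [leftWord, rightWord, substWord_singleton, hτa]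
  | succ m ih =>
      rw [leftWord, rightWord]
      have key : (substWord τ)^[m + 1 + 1] [a] = (substWord τ)^[m + 1] (τ a) := by
        rw [Function.iterate_succ_apply, substWord_singleton]
      rcases Nat.even_or_odd (m + 1) with he | ho
      · have h2 : (m + 1) % 2 = 0 := Nat.even_iff.mp he
        simp only [h2, reduceIte]
        conv_rhs => rw [key, hτa,
          show u ++ a :: (v ++ a :: w) = u ++ ([a] ++ (v ++ a :: w)) from by simp,
          iter_append, iter_append, ← ih]
        simp
      · have h2 : (m + 1) % 2 = 1 := Nat.odd_iff.mp ho
        simp only [h2, reduceIte]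
        conv_rhs => rw [key, hτa,
          show u ++ a :: (v ++ a :: w) = (u ++ a :: v) ++ ([a] ++ w) from by simp,
          iter_append τ (m + 1) (u ++ a :: v) ([a] ++ w),
          iter_append τ (m + 1) [a] w, ← ih]
        simp

lemma getD_skip {A : Type*} [Inhabited A] (X Y : List A) (i : ℕ) :
    (X ++ Y).getD (X.length + i) default = Y.getD i default := by
  rw [List.getD_append_right _ _ _ _ (Nat.le_add_right _ _)]
  simp

lemma getD_block5 {A : Type*} [Inhabited A] (X1 X2 X3 X4 X5 : List A) (i : ℕ)
    (hi : i < X4.length) :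
    (X1 ++ (X2 ++ (X3 ++ (X4 ++ X5)))).getD
      (X1.length + X2.length + X3.length + i) default = X4.getD i default := by
  rw [show X1.length + X2.length + X3.length + i
      = X1.length + (X2.length + (X3.length + i)) from by ring,
    getD_skip, getD_skip, getD_skip, List.getD_append _ _ _ _ hi]

lemma leftWord_len_congr {A : Type*} (τ : A → List A) (p : ℕ)
    (hlen : ∀ a : A, (τ a).length = p) (f f' : ℕ → List A)
    (hff' : ∀ i, (f i).length = (f' i).length) (m : ℕ) :
    (leftWord τ f m).length = (leftWord τ f' m).length := by
  induction m with
  | zero => simpa [leftWord] using hff' 0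
  | succ m ih =>
      rw [leftWord, leftWord, List.length_append, List.length_append,
        iter_len τ p hlen, iter_len τ p hlen, hff' (m + 1), ih]

lemma rightWord_len_congr {A : Type*} (τ : A → List A) (p : ℕ)
    (hlen : ∀ a : A, (τ a).length = p) (g g' : ℕ → List A)
    (hgg' : ∀ i, (g i).length = (g' i).length) (m : ℕ) :
    (rightWord τ g m).length = (rightWord τ g' m).length := by
  induction m with
  | zero => simpa [rightWord] using hgg' 0
  | succ m ih =>
      rw [rightWord, rightWord, List.length_append, List.length_append,
        iter_len τ p hlen, iter_len τ p hlen, hgg' (m + 1), ih]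

lemma leftWord_len_ge {A : Type*} (τ : A → List A) (p : ℕ)
    (hlen : ∀ a : A, (τ a).length = p) (hp : 1 ≤ p) (f : ℕ → List A)
    (hf : ∀ i, (f i).length ≠ 0) (m : ℕ) :
    m + 1 ≤ (leftWord τ f m).length := by
  induction m with
  | zero => rw [leftWord]; have := hf 0; omega
  | succ m ih =>
      rw [leftWord, List.length_append, iter_len τ p hlen]
      have h1 : 1 ≤ p ^ (m + 1) := Nat.one_le_pow _ _ hp
      have h2 : 1 ≤ (f (m + 1)).length := Nat.one_le_iff_ne_zero.mpr (hf (m + 1))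
      have h3 : 1 ≤ p ^ (m + 1) * (f (m + 1)).length := le_trans h1 (Nat.le_mul_of_pos_right _ h2)
      linarith

lemma rightWord_len_ge {A : Type*} (τ : A → List A) (p : ℕ)
    (hlen : ∀ a : A, (τ a).length = p) (hp : 1 ≤ p) (g : ℕ → List A)
    (hg : ∀ i, (g i).length ≠ 0) (m : ℕ) :
    m + 1 ≤ (rightWord τ g m).length := by
  induction m with
  | zero => rw [rightWord]; have := hg 0; omega
  | succ m ih =>
      rw [rightWord, List.length_append, iter_len τ p hlen]
      have h1 : 1 ≤ p ^ (m + 1) := Nat.one_le_pow _ _ hp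
      have h2 : 1 ≤ (g (m + 1)).length := Nat.one_le_iff_ne_zero.mpr (hg (m + 1))
      have h3 : 1 ≤ p ^ (m + 1) * (g (m + 1)).length := le_trans h1 (Nat.le_mul_of_pos_right _ h2)
      linarith
/-- Proposition 3.9: with `τ(a) = u a v a w`, `τ(b) = u' b v' b w'`,
`|u| = |u'| ≠ 0`, `|v| = |v'|`, `|w| = |w'| ≠ 0` and a coincidence between
`vaw` and `v'bw'`, the pair
`x = … τ²(u) τ(uav) u . a (vaw) τ(w) τ²(vaw) …`,
`y = … τ²(u') τ(u'bv') u' . b (v'bw') τ(w') τ²(v'bw') …`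
is a Li–Yorke pair which is recurrent under `T × T` (a strong Li–Yorke pair):
for every `n` the central window `(x(-n,n), y(-n,n))` occurs as a subword-pair
of `(τ^{2m}(a), τ^{2m}(b))` for some `m`. -/
theorem stmt12 {A : Type*} [Fintype A] [Inhabited A]
    (τ : A → List A) (p : ℕ) (hp : 2 ≤ p)
    (hlen : ∀ a : A, (τ a).length = p)
    (hprim : IsPrimitive τ) (hinj : Function.Injective τ)
    (hinf : (XSet τ).Infinite)
    (a b : A) (hab : a ≠ b) (u v w u' v' w' : List A)
    (hτa : τ a = u ++ a :: (v ++ a :: w))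
    (hτb : τ b = u' ++ b :: (v' ++ b :: w'))
    (hu : u.length = u'.length) (hu0 : u.length ≠ 0)
    (hv : v.length = v'.length)
    (hw : w.length = w'.length) (hw0 : w.length ≠ 0)
    (hco : ∃ j : ℕ, j < (v ++ a :: w).length ∧
      (v ++ a :: w).getD j default = (v' ++ b :: w').getD j default)
    (x y : ℤ → A)
    (hx : ∀ m j : ℕ,
      j < (leftWord τ (fun i => if i % 2 = 0 then u else u ++ a :: v) m ++
            a :: rightWord τ (fun i => if i % 2 = 0 then v ++ a :: w else w) m).length →
      x ((j : ℤ) -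
          ((leftWord τ (fun i => if i % 2 = 0 then u else u ++ a :: v) m).length : ℤ)) =
        (leftWord τ (fun i => if i % 2 = 0 then u else u ++ a :: v) m ++
          a :: rightWord τ (fun i => if i % 2 = 0 then v ++ a :: w else w) m).getD
          j default)
    (hy : ∀ m j : ℕ,
      j < (leftWord τ (fun i => if i % 2 = 0 then u' else u' ++ b :: v') m ++
            b :: rightWord τ (fun i => if i % 2 = 0 then v' ++ b :: w' else w') m).length →
      y ((j : ℤ) -
          ((leftWord τ (fun i => if i % 2 = 0 then u' else u' ++ b :: v') m).length : ℤ)) =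
        (leftWord τ (fun i => if i % 2 = 0 then u' else u' ++ b :: v') m ++
          b :: rightWord τ (fun i => if i % 2 = 0 then v' ++ b :: w' else w') m).getD
          j default) :
    IsLiYorkePair x y ∧
      -- `(x,y)` is a recurrent point of `T × T`:
      (∀ N : ℕ, ∃ k : ℕ, 1 ≤ k ∧ ∀ j : ℤ, |j| ≤ (N : ℤ) →
        x (j + k) = x j ∧ y (j + k) = y j) ∧
      -- every central window of `(x,y)` occurs as a subword-pair of
      -- `(τ^{2m}(a), τ^{2m}(b))`:
      (∀ n : ℕ, ∃ m k : ℕ,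
        (∀ j : ℕ, j ≤ 2 * n → k + j < ((substWord τ)^[2 * m] [a]).length) ∧
        ∀ j : ℕ, j ≤ 2 * n →
          x ((j : ℤ) - (n : ℤ)) = ((substWord τ)^[2 * m] [a]).getD (k + j) default ∧
          y ((j : ℤ) - (n : ℤ)) = ((substWord τ)^[2 * m] [b]).getD (k + j) default) := by
  classical
  obtain ⟨j0, hj0lt, hj0eq⟩ := hco
  have hp1 : 1 ≤ p := by omega
  set Fa : ℕ → List A := fun i => if i % 2 = 0 then u else u ++ a :: v with hFa
  set Ga : ℕ → List A := fun i => if i % 2 = 0 then v ++ a :: w else w with hGa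
  set Fb : ℕ → List A := fun i => if i % 2 = 0 then u' else u' ++ b :: v' with hFb
  set Gb : ℕ → List A := fun i => if i % 2 = 0 then v' ++ b :: w' else w' with hGb
  have hca : ∀ m, leftWord τ Fa m ++ a :: rightWord τ Ga m = (substWord τ)^[m + 1] [a] := by
    intro m; rw [hFa, hGa]; exact center τ a u v w hτa m
  have hcb : ∀ m, leftWord τ Fb m ++ b :: rightWord τ Gb m = (substWord τ)^[m + 1] [b] := by
    intro m; rw [hFb, hGb]; exact center τ b u' v' w' hτb m
  have hla : ∀ (c : A) (m : ℕ), ((substWord τ)^[m] [c]).length = p ^ m := by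
    intro c m; rw [iter_len τ p hlen]; simp
  have hWlen : ∀ m, (leftWord τ Fa m ++ a :: rightWord τ Ga m).length = p ^ (m + 1) := by
    intro m; rw [hca m, hla]
  have hWlenb : ∀ m, (leftWord τ Fb m ++ b :: rightWord τ Gb m).length = p ^ (m + 1) := by
    intro m; rw [hcb m, hla]
  have hLeq : ∀ m, (leftWord τ Fa m).length = (leftWord τ Fb m).length := by
    intro m
    refine leftWord_len_congr τ p hlen _ _ ?_ m
    intro i; rw [hFa, hFb]
    by_cases h : i % 2 = 0 <;> simp [h, hu, hv]
  have hReq : ∀ m, (rightWord τ Ga m).length = (rightWord τ Gb m).length := by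
    intro m
    refine rightWord_len_congr τ p hlen _ _ ?_ m
    intro i; rw [hGa, hGb]
    by_cases h : i % 2 = 0 <;> simp [h, hv, hw]
  have hlge : ∀ m, m + 1 ≤ (leftWord τ Fa m).length := by
    refine leftWord_len_ge τ p hlen hp1 _ ?_
    intro i; rw [hFa]
    by_cases h : i % 2 = 0 <;> simp [h, hu0]
  have hrge : ∀ m, m + 1 ≤ (rightWord τ Ga m).length := by
    refine rightWord_len_ge τ p hlen hp1 _ ?_
    intro i; rw [hGa]
    by_cases h : i % 2 = 0 <;> simp [h, hw0]
  have hlr : ∀ m, (leftWord τ Fa m).length + 1 + (rightWord τ Ga m).length = p ^ (m + 1) := by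
    intro m
    have h := hWlen m
    rw [List.length_append, List.length_cons] at h
    omega
  have hlrb : ∀ m, (leftWord τ Fb m).length + 1 + (rightWord τ Gb m).length = p ^ (m + 1) := by
    intro m
    have h := hWlenb m
    rw [List.length_append, List.length_cons] at h
    omega
  have hpval : p = u.length + 1 + v.length + 1 + w.length := by
    have h := congrArg List.length hτa
    rw [hlen a] at h
    simp [List.length_append] at h
    omega
  have hpow : ∀ m : ℕ, m + 1 ≤ p ^ m := by
    intro m
    calc m + 1 ≤ 2 ^ m := Nat.lt_two_pow_self (n := m)
      _ ≤ p ^ m := Nat.pow_le_pow_left hp m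
  -- values of x and y
  have xval : ∀ (m : ℕ) (i : ℤ), -((leftWord τ Fa m).length : ℤ) ≤ i →
      (i + (leftWord τ Fa m).length).toNat < p ^ (m + 1) →
      x i = ((substWord τ)^[m + 1] [a]).getD
        (i + (leftWord τ Fa m).length).toNat default := by
    intro m i h1 h2
    have hj := hx m (i + (leftWord τ Fa m).length).toNat (by rw [hWlen m]; exact h2)
    have heq : ((i + (leftWord τ Fa m).length).toNat : ℤ) -
        ((leftWord τ Fa m).length : ℤ) = i := by omega
    rw [heq] at hj
    rw [hj, hca m]
  have yval : ∀ (m : ℕ) (i : ℤ), -((leftWord τ Fa m).length : ℤ) ≤ i →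
      (i + (leftWord τ Fa m).length).toNat < p ^ (m + 1) →
      y i = ((substWord τ)^[m + 1] [b]).getD
        (i + (leftWord τ Fa m).length).toNat default := by
    intro m i h1 h2
    rw [hLeq m] at h1 h2 ⊢
    have hj := hy m (i + (leftWord τ Fb m).length).toNat (by rw [hWlenb m]; exact h2)
    have heq : ((i + (leftWord τ Fb m).length).toNat : ℤ) -
        ((leftWord τ Fb m).length : ℤ) = i := by omega
    rw [heq] at hj
    rw [hj, hcb m]
  have hx0 : x 0 = a := by
    have hl0 : leftWord τ Fa 0 = u := by rw [leftWord, hFa]; norm_num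
    have hb : u.length <
        (leftWord τ Fa 0 ++ a :: rightWord τ Ga 0).length := by
      rw [hl0, List.length_append, List.length_cons]; omega
    have h := hx 0 u.length hb
    rw [hl0] at h
    rw [show (u.length : ℤ) - (u.length : ℤ) = 0 from by ring] at h
    rw [h]
    have := getD_skip u (a :: rightWord τ Ga 0) 0
    simpa using this
  have hy0 : y 0 = b := by
    have hl0 : leftWord τ Fb 0 = u' := by rw [leftWord, hFb]; norm_num
    have hb : u'.length <
        (leftWord τ Fb 0 ++ b :: rightWord τ Gb 0).length := by
      rw [hl0, List.length_append, List.length_cons]; omega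
    have h := hy 0 u'.length hb
    rw [hl0] at h
    rw [show (u'.length : ℤ) - (u'.length : ℤ) = 0 from by ring] at h
    rw [h]
    have := getD_skip u' (b :: rightWord τ Gb 0) 0
    simpa using this
  have key2 : ∀ N k0 : ℕ, ∃ k : ℕ, k0 ≤ k ∧ 1 ≤ k ∧ ∀ j : ℤ, |j| ≤ (N : ℤ) →
      x (j + k) = x j ∧ y (j + k) = y j := by
    intro N k0
    set m := 2 * (N + k0) + 1 with hm
    have hm1 : (m + 1) % 2 = 0 := by omega
    have hA1 : m + 2 ≤ p ^ (m + 1) := hpow (m + 1)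
    have hlsucc : (leftWord τ Fa (m + 1)).length
        = p ^ (m + 1) * u.length + (leftWord τ Fa m).length := by
      have hfa : Fa (m + 1) = u := by rw [hFa]; simp [hm1]
      rw [leftWord, List.length_append, iter_len τ p hlen, hfa]
    obtain ⟨k, D, hk0, hk1, hkN, hkD, hDbound, hgetA, hgetB⟩ :
        ∃ k D : ℕ,
          k0 ≤ k ∧ 1 ≤ k ∧ N + 1 ≤ k ∧
          k + (leftWord τ Fa (m + 1)).length = D + (leftWord τ Fa m).length ∧
          D + ((leftWord τ Fa m).length + 1 + (rightWord τ Ga m).length)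
            ≤ p ^ (m + 2) ∧
          (∀ i : ℕ, i < p ^ (m + 1) →
            ((substWord τ)^[m + 2] [a]).getD (D + i) default
              = ((substWord τ)^[m + 1] [a]).getD i default) ∧
          (∀ i : ℕ, i < p ^ (m + 1) →
            ((substWord τ)^[m + 2] [b]).getD (D + i) default
              = ((substWord τ)^[m + 1] [b]).getD i default) := by
      refine ⟨p ^ (m + 1) * (1 + v.length),
        p ^ (m + 1) * (u.length + 1 + v.length), ?_, ?_, ?_, ?_, ?_, ?_, ?_⟩
      · calc k0 ≤ m + 2 := by omega
          _ ≤ p ^ (m + 1) := hA1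
          _ ≤ p ^ (m + 1) * (1 + v.length) :=
            Nat.le_mul_of_pos_right _ (by omega)
      · calc 1 ≤ m + 2 := by omega
          _ ≤ p ^ (m + 1) := hA1
          _ ≤ p ^ (m + 1) * (1 + v.length) :=
            Nat.le_mul_of_pos_right _ (by omega)
      · calc N + 1 ≤ m + 2 := by omega
          _ ≤ p ^ (m + 1) := hA1
          _ ≤ p ^ (m + 1) * (1 + v.length) :=
            Nat.le_mul_of_pos_right _ (by omega)
      · rw [hlsucc]; ring
      · rw [hlr m]
        calc p ^ (m + 1) * (u.length + 1 + v.length) + p ^ (m + 1)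
            = p ^ (m + 1) * (u.length + 1 + v.length + 1) := by ring
          _ ≤ p ^ (m + 1) * p := Nat.mul_le_mul_left _ (by omega)
          _ = p ^ (m + 2) := (pow_succ p (m + 1)).symm
      · intro i hi
        have hdecA : (substWord τ)^[m + 2] [a]
            = (substWord τ)^[m + 1] u ++ ((substWord τ)^[m + 1] [a] ++
              ((substWord τ)^[m + 1] v ++ ((substWord τ)^[m + 1] [a] ++
                (substWord τ)^[m + 1] w))) := by
          have h0 : (substWord τ)^[m + 2] [a]
              = (substWord τ)^[m + 1] (substWord τ [a]) :=
            Function.iterate_succ_apply _ _ _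
          rw [h0, substWord_singleton, hτa,
            show u ++ a :: (v ++ a :: w) = u ++ ([a] ++ (v ++ ([a] ++ w)))
              from by simp,
            iter_append, iter_append, iter_append, iter_append]
        rw [hdecA]
        have hgb := getD_block5 ((substWord τ)^[m + 1] u)
          ((substWord τ)^[m + 1] [a]) ((substWord τ)^[m + 1] v)
          ((substWord τ)^[m + 1] [a]) ((substWord τ)^[m + 1] w) i
          (by rw [hla]; exact hi)
        rw [← hgb]
        congr 1
        rw [iter_len τ p hlen, iter_len τ p hlen, iter_len τ p hlen,
          List.length_singleton]
        ring
      · intro i hi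
        have hdecB : (substWord τ)^[m + 2] [b]
            = (substWord τ)^[m + 1] u' ++ ((substWord τ)^[m + 1] [b] ++
              ((substWord τ)^[m + 1] v' ++ ((substWord τ)^[m + 1] [b] ++
                (substWord τ)^[m + 1] w'))) := by
          have h0 : (substWord τ)^[m + 2] [b]
              = (substWord τ)^[m + 1] (substWord τ [b]) :=
            Function.iterate_succ_apply _ _ _
          rw [h0, substWord_singleton, hτb,
            show u' ++ b :: (v' ++ b :: w') = u' ++ ([b] ++ (v' ++ ([b] ++ w')))
              from by simp,
            iter_append, iter_append, iter_append, iter_append]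
        rw [hdecB]
        have hgb := getD_block5 ((substWord τ)^[m + 1] u')
          ((substWord τ)^[m + 1] [b]) ((substWord τ)^[m + 1] v')
          ((substWord τ)^[m + 1] [b]) ((substWord τ)^[m + 1] w') i
          (by rw [hla]; exact hi)
        rw [← hgb]
        congr 1
        rw [iter_len τ p hlen, iter_len τ p hlen, iter_len τ p hlen,
          List.length_singleton, hu, hv]
        ring
    refine ⟨k, hk0, hk1, ?_⟩
    intro j hj
    obtain ⟨hj1, hj2⟩ := abs_le.mp hj
    have hL := hlge m
    have hR := hrge m
    have hiL : ((j : ℤ) + (leftWord τ Fa m).length).toNat < p ^ (m + 1) := by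
      rw [← hlr m]; omega
    have hDb' : D + ((leftWord τ Fa m).length + 1 + (rightWord τ Ga m).length)
        ≤ (leftWord τ Fa (m + 1)).length + 1
          + (rightWord τ Ga (m + 1)).length := by
      rw [hlr (m + 1)]; exact hDbound
    have hb1 : -((leftWord τ Fa m).length : ℤ) ≤ j := by omega
    have hb2 : -((leftWord τ Fa (m + 1)).length : ℤ) ≤ j + k := by omega
    have hb3 : ((j + (k : ℤ)) + (leftWord τ Fa (m + 1)).length).toNat
        < p ^ (m + 1 + 1) := by
      rw [← hlr (m + 1)]
      omega
    have hidx : ((j + (k : ℤ)) + (leftWord τ Fa (m + 1)).length).toNat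
        = D + ((j : ℤ) + (leftWord τ Fa m).length).toNat := by omega
    constructor
    · rw [xval m j hb1 hiL, xval (m + 1) (j + k) hb2 hb3, hidx]
      exact hgetA _ hiL
    · rw [yval m j hb1 hiL, yval (m + 1) (j + k) hb2 hb3, hidx]
      exact hgetB _ hiL
  have prox : IsProximalPair x y := by
    intro N M
    set m := 2 * (M + N) + 1 with hm
    have hm1 : (m + 1) % 2 = 0 := by omega
    have hA1 : m + 2 ≤ p ^ (m + 1) := hpow (m + 1)
    have hR := hrge m
    have hL1 := hlge (m + 1)
    obtain ⟨s, hs1, hs2, hgA, hgB⟩ :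
        ∃ s : ℕ, M ≤ s ∧ s + 2 * N ≤ (rightWord τ Ga (m + 1)).length ∧
          (∀ t : ℕ, t ≤ 2 * N →
            ((substWord τ)^[m + 2] [a]).getD
              ((leftWord τ Fa (m + 1)).length + (s + t)) default
              = ((substWord τ)^[m + 1]
                  [(v ++ a :: w).getD j0 default]).getD t default) ∧
          (∀ t : ℕ, t ≤ 2 * N →
            ((substWord τ)^[m + 2] [b]).getD
              ((leftWord τ Fa (m + 1)).length + (s + t)) default
              = ((substWord τ)^[m + 1]
                  [(v' ++ b :: w').getD j0 default]).getD t default) := by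
      refine ⟨1 + (rightWord τ Ga m).length + j0 * p ^ (m + 1), ?_, ?_, ?_, ?_⟩
      · calc M ≤ 1 + (rightWord τ Ga m).length := by omega
          _ ≤ 1 + (rightWord τ Ga m).length + j0 * p ^ (m + 1) :=
            Nat.le_add_right _ _
      · have hrsucc : (rightWord τ Ga (m + 1)).length
            = (rightWord τ Ga m).length
              + p ^ (m + 1) * (v.length + 1 + w.length) := by
          have hga : Ga (m + 1) = v ++ a :: w := by rw [hGa]; simp [hm1]
          rw [rightWord, List.length_append, iter_len τ p hlen, hga,
            List.length_append, List.length_cons]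
          ring
        rw [hrsucc]
        have hj0' : j0 + 1 ≤ v.length + 1 + w.length := by
          rw [List.length_append, List.length_cons] at hj0lt; omega
        have hNp : 1 + 2 * N ≤ p ^ (m + 1) :=
          le_trans (by omega : 1 + 2 * N ≤ m + 2) hA1
        calc 1 + (rightWord τ Ga m).length + j0 * p ^ (m + 1) + 2 * N
            = (rightWord τ Ga m).length
              + (j0 * p ^ (m + 1) + (1 + 2 * N)) := by ring
          _ ≤ (rightWord τ Ga m).length
              + (j0 * p ^ (m + 1) + p ^ (m + 1)) := by gcongr
          _ = (rightWord τ Ga m).length + (j0 + 1) * p ^ (m + 1) := by ring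
          _ ≤ (rightWord τ Ga m).length
              + (v.length + 1 + w.length) * p ^ (m + 1) := by gcongr
          _ = (rightWord τ Ga m).length
              + p ^ (m + 1) * (v.length + 1 + w.length) := by ring
      · intro t ht
        have htA : t < p ^ (m + 1) :=
          lt_of_lt_of_le (by omega : t < m + 2) hA1
        have hdec : (substWord τ)^[m + 2] [a]
            = leftWord τ Fa (m + 1) ++ ((a :: rightWord τ Ga m) ++
              (substWord τ)^[m + 1] (v ++ a :: w)) := by
          have hga : Ga (m + 1) = v ++ a :: w := by rw [hGa]; simp [hm1]
          have h0 := hca (m + 1)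
          rw [rightWord, hga] at h0
          rw [← h0]
          simp
        rw [hdec,
          show (leftWord τ Fa (m + 1)).length +
              (1 + (rightWord τ Ga m).length + j0 * p ^ (m + 1) + t)
            = (leftWord τ Fa (m + 1)).length +
              ((a :: rightWord τ Ga m).length + (j0 * p ^ (m + 1) + t)) from by
            rw [List.length_cons]; ring,
          getD_skip, getD_skip]
        exact iter_getD_block τ p hlen (m + 1) (v ++ a :: w) j0 t hj0lt htA
      · intro t ht
        have htA : t < p ^ (m + 1) :=
          lt_of_lt_of_le (by omega : t < m + 2) hA1
        have hj0lt' : j0 < (v' ++ b :: w').length := by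
          rw [List.length_append, List.length_cons] at hj0lt ⊢; omega
        have hdec : (substWord τ)^[m + 2] [b]
            = leftWord τ Fb (m + 1) ++ ((b :: rightWord τ Gb m) ++
              (substWord τ)^[m + 1] (v' ++ b :: w')) := by
          have hgb' : Gb (m + 1) = v' ++ b :: w' := by rw [hGb]; simp [hm1]
          have h0 := hcb (m + 1)
          rw [rightWord, hgb'] at h0
          rw [← h0]
          simp
        rw [hdec,
          show (leftWord τ Fa (m + 1)).length +
              (1 + (rightWord τ Ga m).length + j0 * p ^ (m + 1) + t)
            = (leftWord τ Fb (m + 1)).length +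
              ((b :: rightWord τ Gb m).length + (j0 * p ^ (m + 1) + t)) from by
            rw [List.length_cons, ← hLeq (m + 1), ← hReq m]; ring,
          getD_skip, getD_skip]
        exact iter_getD_block τ p hlen (m + 1) (v' ++ b :: w') j0 t hj0lt' htA
    refine ⟨s + N, by omega, ?_⟩
    intro j hj
    obtain ⟨hj1, hj2⟩ := abs_le.mp hj
    have hb1 : -((leftWord τ Fa (m + 1)).length : ℤ) ≤ j + ((s + N : ℕ) : ℤ) := by
      push_cast; omega
    have hb2 : ((j + ((s + N : ℕ) : ℤ)) + (leftWord τ Fa (m + 1)).length).toNat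
        < p ^ (m + 1 + 1) := by
      rw [← hlr (m + 1)]
      push_cast
      omega
    have hidx : ((j + ((s + N : ℕ) : ℤ)) + (leftWord τ Fa (m + 1)).length).toNat
        = (leftWord τ Fa (m + 1)).length + (s + (j + N).toNat) := by
      push_cast; omega
    rw [xval (m + 1) _ hb1 hb2, yval (m + 1) _ hb1 hb2, hidx,
      hgA ((j + N).toNat) (by omega), hgB ((j + N).toNat) (by omega), hj0eq]
  have hinfS : {m : ℤ | x m ≠ y m}.Infinite := by
    apply Set.infinite_of_not_bddAbove
    rintro ⟨C, hC⟩
    obtain ⟨k, hk0, hk1, hkall⟩ := key2 0 (C.toNat + 1)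
    have h := hkall 0 (by simp)
    rw [zero_add] at h
    have hmem : (k : ℤ) ∈ {m : ℤ | x m ≠ y m} := by
      simp only [Set.mem_setOf_eq]
      rw [h.1, h.2, hx0, hy0]
      exact hab
    have := hC hmem
    omega
  refine ⟨⟨prox, hinfS⟩, ?_, ?_⟩
  · intro N
    obtain ⟨k, _, hk1, hkall⟩ := key2 N 0
    exact ⟨k, hk1, hkall⟩
  · intro n
    set M := 2 * n + 1 with hM
    have h2m : 2 * (n + 1) = M + 1 := by omega
    have h1 := hlge M
    have h2 := hrge M
    refine ⟨n + 1, (leftWord τ Fa M).length - n, ?_, ?_⟩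
    · intro j hj
      rw [h2m, hla, ← hlr M]
      omega
    · intro j hj
      have hb1 : -((leftWord τ Fa M).length : ℤ) ≤ (j : ℤ) - n := by omega
      have hb2 : (((j : ℤ) - n) + (leftWord τ Fa M).length).toNat
          < p ^ (M + 1) := by
        rw [← hlr M]; omega
      constructor
      · rw [xval M _ hb1 hb2, h2m,
          show (((j : ℤ) - (n : ℤ)) + (leftWord τ Fa M).length).toNat
            = (leftWord τ Fa M).length - n + j from by omega]
      · rw [yval M _ hb1 hb2, h2m,
          show (((j : ℤ) - (n : ℤ)) + (leftWord τ Fa M).length).toNat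
            = (leftWord τ Fa M).length - n + j from by omega]
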